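/- The gradient of h(W) = tr(e^{W∘W}) − d with respect to W is ∇h(W) = (e^{W∘W})^T ∘ (2W). -/

import Mathlib

open Matrix
open scoped Matrix
open scoped Nat

/-- NOTEARS acyclicity penalty. -/
noncomputable def hAcy {d : ℕ} (W : Matrix (Fin d) (Fin d) ℝ) : ℝ :=
  (NormedSpace.exp (W ⊙ W)).trace - d

section aux

attribute [local instance] Matrix.linftyOpNormedAddCommGroup Matrix.linftyOpNormedRing
  Matrix.linftyOpNormedAlgebra

variable {d : ℕ}

private noncomputable abbrev matTop : TopologicalSpace (Matrix (Fin d) (Fin d) ℝ) :=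
  (Matrix.linftyOpNormedAddCommGroup (m := Fin d) (n := Fin d) (α := ℝ)).toUniformSpace.toTopologicalSpace

attribute [local instance 2000] matTop

private lemma hasDerivAt_addSmul_pow (A B : Matrix (Fin d) (Fin d) ℝ) (n : ℕ) (s : ℝ) :
    HasDerivAt (fun t : ℝ => (A + t • B) ^ n)
      (∑ k ∈ Finset.range n, (A + s • B) ^ k * B * (A + s • B) ^ (n - 1 - k)) s := by
  induction n with
  | zero => simpa using hasDerivAt_const s (1 : Matrix (Fin d) (Fin d) ℝ)
  | succ n ih =>
    have hM : HasDerivAt (fun t : ℝ => A + t • B) B s := by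
      simpa using ((hasDerivAt_id s).smul_const B).const_add A
    have h := ih.mul hM
    have heq : (fun t : ℝ => (A + t • B) ^ n * (A + t • B))
        = fun t : ℝ => (A + t • B) ^ (n + 1) := by
      funext t; rw [← pow_succ]
    rw [Pi.mul_def, heq] at h
    convert h using 1
    · rfl
    · rfl
    rw [Finset.sum_range_succ, Finset.sum_mul]
    congr 1
    · refine Finset.sum_congr rfl fun k hk => ?_
      rw [Finset.mem_range] at hk
      rw [mul_assoc, mul_assoc, ← pow_succ]
      have : n - 1 - k + 1 = n + 1 - 1 - k := by omega
      rw [this, ← mul_assoc]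
    · simp

private lemma trace_deriv_sum (A B : Matrix (Fin d) (Fin d) ℝ) (n : ℕ) (s : ℝ) :
    (∑ k ∈ Finset.range n, (A + s • B) ^ k * B * (A + s • B) ^ (n - 1 - k)).trace
      = n * (((A + s • B) ^ (n - 1)) * B).trace := by
  rw [trace_sum]
  have : ∀ k ∈ Finset.range n,
      ((A + s • B) ^ k * B * (A + s • B) ^ (n - 1 - k)).trace
        = (((A + s • B) ^ (n - 1)) * B).trace := by
    intro k hk
    rw [Finset.mem_range] at hk
    rw [trace_mul_cycle, ← pow_add]
    have : n - 1 - k + k = n - 1 := by omega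
    rw [this]
  rw [Finset.sum_congr rfl this, Finset.sum_const, Finset.card_range, nsmul_eq_mul]

private noncomputable def trMul (B : Matrix (Fin d) (Fin d) ℝ) :
    Matrix (Fin d) (Fin d) ℝ →L[ℝ] ℝ :=
  LinearMap.toContinuousLinearMap
    ((Matrix.traceLinearMap (Fin d) ℝ ℝ).comp (LinearMap.mulRight ℝ B))

private lemma trMul_apply (B X : Matrix (Fin d) (Fin d) ℝ) :
    trMul B X = (X * B).trace := rfl

set_option maxHeartbeats 1000000 in
/-- Key lemma: derivative of `t ↦ tr (exp (A + t • B))` at `0` is `tr (exp A * B)`. -/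
private lemma hasDerivAt_trace_exp [Nonempty (Fin d)] (A B : Matrix (Fin d) (Fin d) ℝ) :
    HasDerivAt (fun t : ℝ => (NormedSpace.exp (A + t • B)).trace)
      ((NormedSpace.exp A * B).trace) 0 := by
  set L := trMul B with hL
  set R : ℝ := ‖A‖ + ‖B‖ with hR
  have hR0 : (0:ℝ) ≤ R := by positivity
  set g : ℕ → ℝ → ℝ := fun n t => ((n.factorial : ℝ))⁻¹ * ((A + t • B) ^ n).trace with hg
  set g' : ℕ → ℝ → ℝ := fun n t =>
    ((n.factorial : ℝ))⁻¹ * (n * (((A + t • B) ^ (n - 1)) * B).trace) with hg'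
  set u : ℕ → ℝ := fun n => ((n.factorial : ℝ))⁻¹ * (n * (‖L‖ * R ^ (n - 1))) with hu
  have hu_succ : ∀ n : ℕ, u (n + 1) = ‖L‖ * (R ^ n / n.factorial) := by
    intro n
    rw [hu]
    simp only [Nat.factorial_succ, Nat.cast_mul, Nat.cast_add, Nat.cast_one,
      Nat.add_sub_cancel, mul_inv]
    have h1 : ((n:ℝ) + 1) ≠ 0 := by positivity
    have h2 : ((n.factorial : ℝ)) ≠ 0 := by positivity
    field_simp
  have husum : Summable u := by
    rw [← summable_nat_add_iff 1]
    simp only [hu_succ]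
    exact (Real.summable_pow_div_factorial R).mul_left ‖L‖
  have hderiv : ∀ (n : ℕ) (y : ℝ), HasDerivAt (g n) (g' n y) y := by
    intro n y
    have h1 := hasDerivAt_addSmul_pow A B n y
    have h2 := ((Matrix.traceLinearMap (Fin d) ℝ ℝ).toContinuousLinearMap.hasFDerivAt.comp_hasDerivAt
      y h1)
    have h3 := h2.const_mul ((n.factorial : ℝ))⁻¹
    convert h3 using 1
    · rfl
    · rfl
    · rfl
    simp only [LinearMap.coe_toContinuousLinearMap', traceLinearMap_apply]
    rw [trace_deriv_sum]
  have hbound : ∀ (n : ℕ) (y : ℝ), y ∈ Metric.ball (0:ℝ) 1 → ‖g' n y‖ ≤ u n := by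
    intro n y hy
    have hMy : ‖A + y • B‖ ≤ R := by
      calc ‖A + y • B‖ ≤ ‖A‖ + ‖y • B‖ := norm_add_le _ _
        _ ≤ ‖A‖ + ‖B‖ := by
            refine add_le_add_right ?_ _
            rw [norm_smul]
            have : ‖y‖ ≤ 1 := by
              simpa [Real.norm_eq_abs] using le_of_lt (by simpa using hy)
            nlinarith [norm_nonneg B]
    have hpow : ‖(A + y • B) ^ (n - 1)‖ ≤ R ^ (n - 1) :=
      le_trans (norm_pow_le _ _) (pow_le_pow_left₀ (norm_nonneg _) hMy _)
    have htr : ‖(((A + y • B) ^ (n - 1)) * B).trace‖ ≤ ‖L‖ * R ^ (n - 1) := by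
      have h4 := L.le_opNorm ((A + y • B) ^ (n - 1))
      rw [trMul_apply] at h4
      exact le_trans h4 (by nlinarith [norm_nonneg L])
    rw [hg', hu]
    simp only [norm_mul, Real.norm_eq_abs]
    rw [abs_of_nonneg (by positivity : (0:ℝ) ≤ ((n.factorial : ℝ))⁻¹),
      abs_of_nonneg (by positivity : (0:ℝ) ≤ (n:ℝ))]
    have h5 : |((((A + y • B) ^ (n - 1)) * B).trace)| ≤ ‖L‖ * R ^ (n - 1) := htr
    have hn0 : (0:ℝ) ≤ (n:ℝ) := by positivity
    have hfac : (0:ℝ) ≤ ((n.factorial : ℝ))⁻¹ := by positivity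
    exact mul_le_mul_of_nonneg_left (mul_le_mul_of_nonneg_left h5 hn0) hfac
  have hsum0 : Summable fun n => g n 0 := by
    have hs := (NormedSpace.expSeries_summable' (𝕂 := ℝ) A).mapL
      (Matrix.traceLinearMap (Fin d) ℝ ℝ).toContinuousLinearMap
    convert hs using 2 with n
    · rfl
    rw [hg]
    simp [trace_smul, smul_eq_mul]
  have hmain := hasDerivAt_tsum_of_isPreconnected husum Metric.isOpen_ball
    (convex_ball (0:ℝ) 1).isPreconnected (fun n y _ => hderiv n y) hbound
    (Metric.mem_ball_self one_pos) hsum0 (Metric.mem_ball_self one_pos)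
  have hfun : (fun z : ℝ => ∑' n, g n z)
      = fun t : ℝ => (NormedSpace.exp (A + t • B)).trace := by
    funext t
    rw [NormedSpace.exp_eq_tsum ℝ]
    beta_reduce
    have hmt := (Matrix.traceLinearMap (Fin d) ℝ ℝ).toContinuousLinearMap.map_tsum
      (NormedSpace.expSeries_summable' (𝕂 := ℝ) (A + t • B))
    simp only [LinearMap.coe_toContinuousLinearMap', traceLinearMap_apply] at hmt
    rw [hmt]
    congr 1
    funext n
    simp [hg, trace_smul, smul_eq_mul]
  have hval : (∑' n, g' n 0) = (NormedSpace.exp A * B).trace := by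
    have hsum' : Summable fun n => g' n 0 :=
      Summable.of_norm_bounded husum fun n => hbound n 0 (Metric.mem_ball_self one_pos)
    rw [Summable.tsum_eq_zero_add hsum']
    have h0 : g' 0 0 = 0 := by simp [hg']
    have hsucc : ∀ n : ℕ, g' (n + 1) 0 = ((n.factorial : ℝ))⁻¹ * ((A ^ n) * B).trace := by
      intro n
      rw [hg']
      simp only [zero_smul, add_zero, Nat.add_sub_cancel, Nat.factorial_succ, Nat.cast_mul,
        Nat.cast_add, Nat.cast_one, mul_inv]
      have h1 : ((n:ℝ) + 1) ≠ 0 := by positivity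
      have h2 : ((n.factorial : ℝ)) ≠ 0 := by positivity
      field_simp
    rw [h0, zero_add]
    have hLe : (NormedSpace.exp A * B).trace = L (NormedSpace.exp A) := by
      rw [hL, trMul_apply]
    rw [hLe, NormedSpace.exp_eq_tsum ℝ]
    beta_reduce
    rw [L.map_tsum (NormedSpace.expSeries_summable' (𝕂 := ℝ) A)]
    congr 1
    funext n
    rw [hsucc, hL, trMul_apply, smul_mul_assoc, trace_smul, smul_eq_mul]
  rw [hfun, hval] at hmain
  exact hmain

end aux

/-- Entrywise, `∂h/∂W_{ij} = 2 W_{ij} (e^{W∘W})_{ji}`, i.e. the gradient of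
`h(W) = tr(e^{W∘W}) − d` is `(e^{W∘W})ᵀ ∘ (2W)`. -/
theorem gradient_of_notears_penalty {d : ℕ} (W : Matrix (Fin d) (Fin d) ℝ)
    (i j : Fin d) :
    HasDerivAt (fun t : ℝ => hAcy (W + t • Matrix.single i j 1))
      (((NormedSpace.exp (W ⊙ W))ᵀ ⊙ ((2 : ℝ) • W)) i j) 0 := by
  haveI : Nonempty (Fin d) := ⟨i⟩
  set E := Matrix.single i j (1:ℝ) with hE
  set A := W ⊙ W with hA
  have hhad : ∀ t : ℝ, (W + t • E) ⊙ (W + t • E) = A + (2 * W i j * t + t ^ 2) • E := by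
    intro t
    ext a b
    simp only [hadamard_apply, Matrix.add_apply, Matrix.smul_apply, hE, hA,
      Matrix.single, Matrix.of_apply, smul_eq_mul]
    by_cases h : i = a ∧ j = b
    · obtain ⟨rfl, rfl⟩ := h
      simp only [and_self, if_true]
      ring
    · simp only [h, if_false]
      ring
  have hφ : HasDerivAt (fun t : ℝ => 2 * W i j * t + t ^ 2) (2 * W i j) 0 := by
    have h1 : HasDerivAt (fun t : ℝ => 2 * W i j * t) (2 * W i j) 0 := by
      simpa using (hasDerivAt_id (0:ℝ)).const_mul (2 * W i j)
    have h2 : HasDerivAt (fun t : ℝ => t ^ 2) 0 0 := by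
      simpa using hasDerivAt_pow 2 (0:ℝ)
    simpa [Pi.add_def] using h1.add h2
  have hexp := hasDerivAt_trace_exp A E
  have hφ0 : (fun t : ℝ => 2 * W i j * t + t ^ 2) 0 = 0 := by norm_num
  have hexp' : HasDerivAt (fun s : ℝ => (NormedSpace.exp (A + s • E)).trace)
      ((NormedSpace.exp A * E).trace) ((fun t : ℝ => 2 * W i j * t + t ^ 2) 0) := by
    rw [hφ0]; exact hexp
  have hcomp := hexp'.comp 0 hφ
  have hfun : (fun t : ℝ => hAcy (W + t • E))
      = fun t : ℝ => ((fun s : ℝ => (NormedSpace.exp (A + s • E)).trace) ∘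
          (fun t : ℝ => 2 * W i j * t + t ^ 2)) t - d := by
    funext t
    rw [hAcy, hhad t]
    rfl
  have hmain : HasDerivAt (fun t : ℝ => hAcy (W + t • E))
      ((NormedSpace.exp A * E).trace * (2 * W i j)) 0 := by
    rw [hfun]
    exact hcomp.sub_const (d : ℝ)
  have hval : (NormedSpace.exp A * E).trace * (2 * W i j)
      = ((NormedSpace.exp A)ᵀ ⊙ ((2 : ℝ) • W)) i j := by
    rw [hadamard_apply, Matrix.transpose_apply, Matrix.smul_apply, smul_eq_mul]
    have htr : (NormedSpace.exp A * E).trace = NormedSpace.exp A j i := by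
      rw [Matrix.trace]
      simp only [Matrix.diag, Matrix.mul_apply, hE, Matrix.single, Matrix.of_apply]
      simp [ite_and, Finset.sum_ite_eq, Finset.sum_ite_eq']
    rw [htr]
  rw [← hval]
  exact hmain
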